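/- The set Z↓₀ of sequences z = ((s_k, v_k))_{k≥1} in ([0,1] × [0,∞))^ℕ that are nonincreasing for the lexicographic order and satisfy Σ_k s_k ≤ 1 is a Gδ subset of the product space ([0,1] × [0,∞))^ℕ with the product topology; and Z↓ = {z ∈ Z↓₀ : v_k = 0 whenever s_k = 0} is also a Gδ subset of ([0,1] × [0,∞))^ℕ. Consequently Z↓, with the subspace topology, is a Polish space. -/

import Mathlib

/-- The ambient product space `([0,1] × [0,∞))^ℕ`. -/
abbrev ZSeq : Type := ℕ → ↥(Set.Icc (0:ℝ) 1) × ↥(Set.Ici (0:ℝ))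

/-- Lexicographic order on `[0,1] × [0,∞)`. -/
def lexLe' (a b : ↥(Set.Icc (0:ℝ) 1) × ↥(Set.Ici (0:ℝ))) : Prop :=
  (a.1 : ℝ) < b.1 ∨ ((a.1 : ℝ) = b.1 ∧ (a.2 : ℝ) ≤ b.2)

/-- `Z↓₀`: lexicographically nonincreasing sequences with `Σ_k s_k ≤ 1`. -/
def Zdown0 : Set ZSeq :=
  {z | (∀ k, lexLe' (z (k + 1)) (z k)) ∧ ∀ n, ∑ k ∈ Finset.range n, ((z k).1 : ℝ) ≤ 1}

/-- `Z↓`: elements of `Z↓₀` with `v_k = 0` whenever `s_k = 0`. -/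
def Zdown : Set ZSeq :=
  {z | z ∈ Zdown0 ∧ ∀ k, ((z k).1 : ℝ) = 0 → ((z k).2 : ℝ) = 0}

private lemma le_of_forall_lt_one_div {a b : ℝ} (h : ∀ n : ℕ, a < b + 1 / (n + 1)) :
    a ≤ b := by
  by_contra h'
  push_neg at h'
  obtain ⟨n, hn⟩ := exists_nat_one_div_lt (sub_pos.mpr h')
  have := h n
  linarith

private lemma cont_s (k : ℕ) : Continuous fun z : ZSeq => ((z k).1 : ℝ) :=
  continuous_subtype_val.comp ((continuous_apply k).fst)

private lemma cont_v (k : ℕ) : Continuous fun z : ZSeq => ((z k).2 : ℝ) :=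
  continuous_subtype_val.comp ((continuous_apply k).snd)

private lemma lex_Gdelta : IsGδ {z : ZSeq | ∀ k, lexLe' (z (k + 1)) (z k)} := by
  have heq : {z : ZSeq | ∀ k, lexLe' (z (k + 1)) (z k)} =
      ⋂ (k : ℕ) (n : ℕ), {z : ZSeq | ((z (k + 1)).1 : ℝ) < (z k).1 ∨
        (((z (k + 1)).1 : ℝ) < (z k).1 + 1 / (n + 1) ∧
          ((z (k + 1)).2 : ℝ) < (z k).2 + 1 / (n + 1))} := by
    ext z
    simp only [Set.mem_setOf_eq, Set.mem_iInter]
    constructor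
    · intro h k n
      rcases h k with hlt | ⟨heq, hle⟩
      · exact Or.inl hlt
      · refine Or.inr ⟨?_, ?_⟩ <;>
        · have : (0:ℝ) < 1 / (n + 1) := by positivity
          linarith
    · intro h k
      by_cases hlt : ((z (k + 1)).1 : ℝ) < (z k).1
      · exact Or.inl hlt
      · have h1 : ∀ n : ℕ, ((z (k + 1)).1 : ℝ) < (z k).1 + 1 / (n + 1) ∧
            ((z (k + 1)).2 : ℝ) < (z k).2 + 1 / (n + 1) := fun n =>
          (h k n).resolve_left hlt
        exact Or.inr ⟨le_antisymm (le_of_forall_lt_one_div fun n => (h1 n).1)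
          (not_lt.mp hlt), le_of_forall_lt_one_div fun n => (h1 n).2⟩
  rw [heq]
  refine .iInter fun k => .iInter fun n => IsOpen.isGδ ?_
  exact (isOpen_lt (cont_s (k + 1)) (cont_s k)).union
    ((isOpen_lt (cont_s (k + 1)) ((cont_s k).add continuous_const)).inter
      (isOpen_lt (cont_v (k + 1)) ((cont_v k).add continuous_const)))

private lemma sum_closed :
    IsClosed {z : ZSeq | ∀ n, ∑ k ∈ Finset.range n, ((z k).1 : ℝ) ≤ 1} := by
  have : {z : ZSeq | ∀ n, ∑ k ∈ Finset.range n, ((z k).1 : ℝ) ≤ 1} =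
      ⋂ n : ℕ, {z : ZSeq | ∑ k ∈ Finset.range n, ((z k).1 : ℝ) ≤ 1} := by
    ext z; simp
  rw [this]
  exact isClosed_iInter fun n =>
    isClosed_le (continuous_finset_sum _ fun k _ => cont_s k) continuous_const

private lemma vanish_Gdelta :
    IsGδ {z : ZSeq | ∀ k, ((z k).1 : ℝ) = 0 → ((z k).2 : ℝ) = 0} := by
  have heq : {z : ZSeq | ∀ k, ((z k).1 : ℝ) = 0 → ((z k).2 : ℝ) = 0} =
      ⋂ (k : ℕ) (n : ℕ), {z : ZSeq | (0:ℝ) < (z k).1 ∨ ((z k).2 : ℝ) < 1 / (n + 1)} := by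
    ext z
    simp only [Set.mem_setOf_eq, Set.mem_iInter]
    constructor
    · intro h k n
      by_cases hs : (0:ℝ) < (z k).1
      · exact Or.inl hs
      · have hs0 : ((z k).1 : ℝ) = 0 := le_antisymm (not_lt.mp hs) (z k).1.2.1
        have : ((z k).2 : ℝ) = 0 := h k hs0
        refine Or.inr ?_
        rw [this]; positivity
    · intro h k hs0
      have hv : ∀ n : ℕ, ((z k).2 : ℝ) < 1 / (n + 1) := fun n =>
        (h k n).resolve_left (by rw [hs0]; exact lt_irrefl 0)
      have hle : ((z k).2 : ℝ) ≤ 0 := by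
        have := le_of_forall_lt_one_div (a := ((z k).2 : ℝ)) (b := 0)
          (fun n => by simpa using hv n)
        simpa using this
      exact le_antisymm hle (z k).2.2
  rw [heq]
  refine .iInter fun k => .iInter fun n => IsOpen.isGδ ?_
  exact (isOpen_lt continuous_const (cont_s k)).union
    (isOpen_lt (cont_v k) continuous_const)


open Metric Topology in
private lemma isGδ_polishSpace {X : Type*} [TopologicalSpace X] [PolishSpace X]
    {s : Set X} (hs : IsGδ s) : PolishSpace s := by
  classical
  obtain ⟨U, hU, rfl⟩ := hs.eq_iInter_nat
  letI := TopologicalSpace.upgradeIsCompletelyMetrizable X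
  set D : ℕ → Set X := fun n => (U n)ᶜ with hD
  have hDclosed : ∀ n, IsClosed (D n) := fun n => (hU n).isClosed_compl
  set g : ↥(⋂ n, U n) → ℕ → ℝ := fun x n => (infDist (x : X) (D n))⁻¹ with hg
  have hmemU : ∀ (x : ↥(⋂ n, U n)) (n : ℕ), (x : X) ∈ U n := by
    intro x n
    have := x.2
    rw [Set.mem_iInter] at this
    exact this n
  have hpos : ∀ (x : ↥(⋂ n, U n)) (n : ℕ), (D n).Nonempty → 0 < infDist (x : X) (D n) := by
    intro x n hne
    exact ((hDclosed n).notMem_iff_infDist_pos hne).mp (fun hc => hc (hmemU x n))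
  have hcont : ∀ n, Continuous fun x : ↥(⋂ n, U n) => (infDist (x : X) (D n))⁻¹ := by
    intro n
    rcases Set.eq_empty_or_nonempty (D n) with h | h
    · simp only [h, infDist_empty]
      exact continuous_const
    · refine continuous_iff_continuousAt.mpr fun x => ?_
      exact (((continuous_infDist_pt (D n)).comp continuous_subtype_val).continuousAt).inv₀
        (hpos x n h).ne'
  set f : ↥(⋂ n, U n) → X × (ℕ → ℝ) := fun x => ((x : X), g x) with hf
  have hfc : Continuous f := continuous_subtype_val.prodMk (continuous_pi fun n => hcont n)
  have hemb : IsEmbedding f :=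
    IsEmbedding.of_comp hfc continuous_fst IsEmbedding.subtypeVal
  have hrange : IsClosed (Set.range f) := by
    have hchar : Set.range f = ⋂ n, {p : X × (ℕ → ℝ) |
        if D n = ∅ then p.2 n = 0 else p.2 n * infDist p.1 (D n) = 1} := by
      ext p
      simp only [Set.mem_range, Set.mem_iInter, Set.mem_setOf_eq]
      constructor
      · rintro ⟨x, rfl⟩ n
        by_cases h : D n = ∅
        · simp [hf, hg, h, infDist_empty]
        · rw [if_neg h]
          exact inv_mul_cancel₀ (hpos x n (Set.nonempty_iff_ne_empty.mpr h)).ne'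
      · intro h
        have hmem : p.1 ∈ ⋂ n, U n := by
          rw [Set.mem_iInter]
          intro n
          by_cases hDn : D n = ∅
          · have : (U n)ᶜ = ∅ := hDn
            rw [Set.compl_empty_iff] at this
            rw [this]; trivial
          · have h1 := h n
            rw [if_neg hDn] at h1
            by_contra hc
            have : infDist p.1 (D n) = 0 := infDist_zero_of_mem hc
            rw [this, mul_zero] at h1
            exact one_ne_zero h1.symm
        refine ⟨⟨p.1, hmem⟩, ?_⟩
        have h2 : p.2 = g ⟨p.1, hmem⟩ := by
          funext n
          by_cases hDn : D n = ∅
          · have h1 := h n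
            rw [if_pos hDn] at h1
            simp [hg, hDn, infDist_empty, h1]
          · have h1 := h n
            rw [if_neg hDn] at h1
            exact eq_inv_of_mul_eq_one_left h1
        simp [hf, ← h2]
    rw [hchar]
    refine isClosed_iInter fun n => ?_
    by_cases hDn : D n = ∅
    · simp only [if_pos hDn]
      exact isClosed_eq ((continuous_apply n).comp continuous_snd) continuous_const
    · simp only [if_neg hDn]
      exact isClosed_eq (((continuous_apply n).comp continuous_snd).mul
        ((continuous_infDist_pt (D n)).comp continuous_fst)) continuous_const
  have hce : IsClosedEmbedding f := ⟨hemb, hrange⟩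
  exact hce.polishSpace

/-- **`Z↓` is Polish.** Both `Z↓₀` and `Z↓` are `Gδ` subsets of the product space
`([0,1] × [0,∞))^ℕ`; consequently `Z↓` is a Polish space for the subspace topology. -/
theorem Zdown_Gdelta_polish : IsGδ Zdown0 ∧ IsGδ Zdown ∧ PolishSpace ↥Zdown := by
  haveI : PolishSpace ↥(Set.Icc (0:ℝ) 1) := isClosed_Icc.polishSpace
  haveI : PolishSpace ↥(Set.Ici (0:ℝ)) := isClosed_Ici.polishSpace
  have hZ0 : IsGδ Zdown0 := by
    have : Zdown0 = {z : ZSeq | ∀ k, lexLe' (z (k + 1)) (z k)} ∩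
        {z : ZSeq | ∀ n, ∑ k ∈ Finset.range n, ((z k).1 : ℝ) ≤ 1} := rfl
    rw [this]
    exact lex_Gdelta.inter sum_closed.isGδ
  have hZ : IsGδ Zdown := by
    have : Zdown = Zdown0 ∩ {z : ZSeq | ∀ k, ((z k).1 : ℝ) = 0 → ((z k).2 : ℝ) = 0} := rfl
    rw [this]
    exact hZ0.inter vanish_Gdelta
  exact ⟨hZ0, hZ, isGδ_polishSpace hZ⟩
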